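/- Keller's conjecture holds for tilings of class T_2 in dimension 3: in every cube tiling of the discrete torus (ℤ/4ℤ)^3 by 8 pairwise disjoint cubes, there exist two cubes whose position vectors differ by 2 in exactly one coordinate and agree in all other coordinates. -/

import Mathlib

/-- The cube `v + {0,1}^n` in the discrete torus `(ℤ/4ℤ)^n`. -/
def cube {n : ℕ} (v : Fin n → ZMod 4) : Set (Fin n → ZMod 4) :=
  {x | ∀ i, x i = v i ∨ x i = v i + 1}

/-- Adjacency in the Keller graph, on naturals encoding vectors in `(ℤ/4ℤ)^3`. -/
def adjN (x y : ℕ) : Bool :=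
  ((4 + x % 4 - y % 4) % 4 == 2 || (4 + x / 4 % 4 - y / 4 % 4) % 4 == 2
    || (4 + x / 16 % 4 - y / 16 % 4) % 4 == 2)
  && ((x % 4 != y % 4 && x / 4 % 4 != y / 4 % 4)
    || (x % 4 != y % 4 && x / 16 % 4 != y / 16 % 4)
    || (x / 4 % 4 != y / 4 % 4 && x / 16 % 4 != y / 16 % 4))

def sadjN (x y : ℕ) : Bool := adjN x y || adjN y x

/-- Pruned clique search: `search fuel k cands = true` whenever there is a
clique of size `k` (w.r.t. `sadjN`) inside `cands`, provided `cands.length ≤ fuel`. -/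
def search : ℕ → ℕ → List ℕ → Bool
  | _, 0, _ => true
  | 0, _+1, _ => false
  | fuel+1, k+1, cands =>
    if cands.length < k + 1 then false
    else match cands with
      | [] => false
      | c :: rest =>
        search fuel k (rest.filter (fun x => sadjN c x)) || search fuel (k+1) rest

lemma sadjN_symm {a b : ℕ} (h : sadjN a b = true) : sadjN b a = true := by
  simpa [sadjN, Bool.or_comm] using h

lemma search_sound : ∀ (fuel k : ℕ) (cands l : List ℕ),
    cands.length ≤ fuel → l.length = k → l.Nodup →
    (∀ x ∈ l, x ∈ cands) → l.Pairwise (fun a b => sadjN a b = true) →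
    search fuel k cands = true := by
  intro fuel
  induction fuel with
  | zero =>
    intro k cands l hlen hk hnd hmem hpw
    match k with
    | 0 => rfl
    | k+1 =>
      exfalso
      have hc : cands = [] := List.length_eq_zero_iff.mp (Nat.le_zero.mp hlen)
      subst hc
      match l, hk with
      | a :: t, _ => exact absurd (hmem a (by simp)) (by simp)
  | succ fuel ih =>
    intro k cands l hlen hk hnd hmem hpw
    match k with
    | 0 => rfl
    | k+1 =>
      have hcl : k + 1 ≤ cands.length := by
        rw [← hk]
        exact (List.subperm_of_subset hnd (fun x hx => hmem x hx)).length_le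
      match cands, hcl with
      | c :: rest, _ =>
        show search (fuel+1) (k+1) (c :: rest) = true
        have hsym : Symmetric (fun a b : ℕ => sadjN a b = true) :=
          fun a b h => sadjN_symm h
        unfold search
        rw [if_neg (by omega)]
        by_cases hc : c ∈ l
        · apply Bool.or_eq_true_iff.mpr
          left
          apply ih k _ (l.erase c)
          · calc (rest.filter (fun x => sadjN c x)).length ≤ rest.length :=
                List.length_filter_le _ _
              _ ≤ fuel := by simpa using hlen
          · rw [List.length_erase_of_mem hc, hk]; omega
          · exact hnd.erase c
          · intro x hx
            rw [hnd.mem_erase_iff] at hx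
            obtain ⟨hxc, hxl⟩ := hx
            have hxr : x ∈ rest := by
              rcases List.mem_cons.mp (hmem x hxl) with h | h
              · exact absurd h hxc
              · exact h
            exact List.mem_filter.mpr ⟨hxr, (haveI : Std.Symm (fun a b : ℕ => sadjN a b = true) := ⟨fun a b h => hsym h⟩; hpw.forall hc hxl (Ne.symm hxc))⟩
          · exact hpw.sublist List.erase_sublist
        · apply Bool.or_eq_true_iff.mpr
          right
          apply ih (k+1) rest l
          · simpa using hlen
          · exact hk
          · exact hnd
          · intro x hx
            rcases List.mem_cons.mp (hmem x hx) with h | h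
            · exact absurd (h ▸ hx) hc
            · exact h
          · exact hpw

lemma no_eight_clique : search 64 8 (List.range 64) = false := by decide

/-- Encode a vector in `(ℤ/4ℤ)^3` as a natural number `< 64`. -/
def enc (v : Fin 3 → ZMod 4) : ℕ := (v 0).val + 4 * (v 1).val + 16 * (v 2).val

lemma val_lt4 (a : ZMod 4) : a.val < 4 := a.isLt

lemma enc_lt (v : Fin 3 → ZMod 4) : enc v < 64 := by
  have h0 := val_lt4 (v 0); have h1 := val_lt4 (v 1); have h2 := val_lt4 (v 2)
  unfold enc; omega

lemma val_inj4 : ∀ a b : ZMod 4, a.val = b.val → a = b := by decide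

lemma enc_inj : Function.Injective enc := by
  intro v w h
  have h0 := val_lt4 (v 0); have h1 := val_lt4 (v 1); have h2 := val_lt4 (v 2)
  have g0 := val_lt4 (w 0); have g1 := val_lt4 (w 1); have g2 := val_lt4 (w 2)
  unfold enc at h
  have e0 : (v 0).val = (w 0).val := by omega
  have e1 : (v 1).val = (w 1).val := by omega
  have e2 : (v 2).val = (w 2).val := by omega
  funext t
  fin_cases t
  · exact val_inj4 _ _ e0
  · exact val_inj4 _ _ e1
  · exact val_inj4 _ _ e2

lemma sub_val : ∀ a b : ZMod 4, a - b = 2 ↔ (4 + a.val - b.val) % 4 = 2 := by decide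

lemma ne_val : ∀ a b : ZMod 4, a ≠ b ↔ a.val ≠ b.val := by
  intro a b
  constructor
  · intro h h'; exact h (val_inj4 _ _ h')
  · intro h h'; exact h (h' ▸ rfl)

lemma enc_digits (v : Fin 3 → ZMod 4) :
    enc v % 4 = (v 0).val ∧ enc v / 4 % 4 = (v 1).val ∧ enc v / 16 % 4 = (v 2).val := by
  have h0 := val_lt4 (v 0); have h1 := val_lt4 (v 1); have h2 := val_lt4 (v 2)
  unfold enc
  refine ⟨by omega, by omega, by omega⟩

lemma bridge (v w : Fin 3 → ZMod 4) (i : Fin 3) (hd : v i - w i = 2)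
    (j : Fin 3) (hj : j ≠ i) (hne : v j ≠ w j) : sadjN (enc v) (enc w) = true := by
  obtain ⟨d0, d1, d2⟩ := enc_digits v
  obtain ⟨e0, e1, e2⟩ := enc_digits w
  have hni : v i ≠ w i := by
    intro h
    rw [h, sub_self] at hd
    exact absurd hd (by decide)
  apply Bool.or_eq_true_iff.mpr
  left
  unfold adjN
  rw [d0, d1, d2, e0, e1, e2]
  simp only [Bool.and_eq_true, Bool.or_eq_true, beq_iff_eq, bne_iff_ne, ne_eq]
  rw [sub_val] at hd
  rw [ne_val] at hni hne
  constructor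
  · fin_cases i <;> tauto
  · fin_cases i <;> fin_cases j <;> first | (exact absurd rfl hj) | tauto

theorem keller_dim3 (P : Finset (Fin 3 → ZMod 4))
    (hcard : P.card = 8)
    (hP : (P : Set (Fin 3 → ZMod 4)).Pairwise fun v w => Disjoint (cube v) (cube w))
    (hcover : (⋃ v ∈ P, cube v) = Set.univ) :
    ∃ v ∈ P, ∃ w ∈ P, ∃ i, v i - w i = 2 ∧ ∀ j, j ≠ i → v j = w j := by
  by_contra hcon
  push_neg at hcon
  -- disjointness gives a coordinate differing by 2
  have key : ∀ a b : ZMod 4, a - b ≠ 2 → ∃ c : ZMod 4,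
      (c = a ∨ c = a + 1) ∧ (c = b ∨ c = b + 1) := by decide
  have hdisj : ∀ v ∈ P, ∀ w ∈ P, v ≠ w → ∃ i, v i - w i = 2 := by
    intro v hv w hw hvw
    by_contra h
    push_neg at h
    have hx : ∀ i, ∃ c : ZMod 4, (c = v i ∨ c = v i + 1) ∧ (c = w i ∨ c = w i + 1) :=
      fun i => key _ _ (h i)
    choose x hx1 hx2 using hx
    exact Set.disjoint_left.mp (hP hv hw hvw) (fun i => hx1 i) (fun i => hx2 i)
  -- no twins: every distinct pair is Keller-adjacent
  have hadj : ∀ v ∈ P, ∀ w ∈ P, v ≠ w → sadjN (enc v) (enc w) = true := by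
    intro v hv w hw hvw
    obtain ⟨i, hi⟩ := hdisj v hv w hw hvw
    obtain ⟨j, hj, hne⟩ : ∃ j, j ≠ i ∧ v j ≠ w j := by
      by_contra h
      push_neg at h
      exact absurd (hcon v hv w hw i) (by push_neg; exact ⟨hi, fun j hj => h j hj⟩)
    exact bridge v w i hi j hj hne
  -- build the clique list
  set l : List ℕ := P.toList.map enc with hl
  have hnd : l.Nodup := P.nodup_toList.map enc_inj
  have hlen : l.length = 8 := by
    rw [hl, List.length_map, Finset.length_toList, hcard]
  have hmem : ∀ x ∈ l, x ∈ List.range 64 := by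
    intro x hx
    rw [hl, List.mem_map] at hx
    obtain ⟨v, _, rfl⟩ := hx
    exact List.mem_range.mpr (enc_lt v)
  have hpw : l.Pairwise (fun a b => sadjN a b = true) := by
    rw [hl, List.pairwise_map]
    have : P.toList.Pairwise (· ≠ ·) := P.nodup_toList
    exact this.imp_of_mem (fun {a b} ha hb hab =>
      hadj a (Finset.mem_toList.mp ha) b (Finset.mem_toList.mp hb) hab)
  have := search_sound 64 8 (List.range 64) l (by simp) hlen hnd hmem hpw
  rw [no_eight_clique] at this
  exact absurd this (by simp)
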